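/- If 𝔲 is an ultrafilter on ω and f : ω → ω satisfies f(𝔲) = 𝔲 (the pushforward equals 𝔲), then {n : f(n) = n} ∈ 𝔲. -/

import Mathlib

open Function Filter

/-- Key combinatorial lemma: if `U ∈ 𝔲`, `g` agrees with `f` on `U`, `idx` increases by
at most one along `g`-steps from `U`, and every point of `U` eventually escapes
(leaves `U` or changes `idx`) under iteration of `g`, then we get a contradiction
with `map f 𝔲 = 𝔲`. -/
private lemma rk_aux (𝔲 : Ultrafilter ℕ) (f g : ℕ → ℕ)
    (hf : Ultrafilter.map f 𝔲 = 𝔲)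
    (U : Set ℕ) (hU : U ∈ 𝔲) (hg : ∀ n ∈ U, g n = f n) (idx : ℕ → ℕ)
    (hstep : ∀ n ∈ U, idx (g n) = idx n ∨ idx (g n) = idx n + 1)
    (hesc : ∀ n ∈ U, ∃ j, g^[j] n ∉ U ∨ idx (g^[j] n) ≠ idx n) : False := by
  classical
  set s : ℕ → ℕ := fun n => sInf {j | g^[j] n ∉ U ∨ idx (g^[j] n) ≠ idx n} with hs
  have hmemS : ∀ n ∈ U, (g^[s n] n ∉ U ∨ idx (g^[s n] n) ≠ idx n) := fun n hn =>
    Nat.sInf_mem (hesc n hn)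
  have hrec : ∀ n ∈ U, g n ∈ U → idx (g n) = idx n → s n = s (g n) + 1 := by
    intro n hn hgn hidx
    have hsetEq : ∀ j, (g^[j] (g n) ∉ U ∨ idx (g^[j] (g n)) ≠ idx (g n)) ↔
        (g^[j + 1] n ∉ U ∨ idx (g^[j + 1] n) ≠ idx n) := by
      intro j
      rw [hidx, ← Function.iterate_succ_apply]
    have h1 : s n ≤ s (g n) + 1 := by
      apply Nat.sInf_le
      exact (hsetEq _).mp (Nat.sInf_mem (hesc (g n) hgn))
    have hpos : 1 ≤ s n := by
      rcases Nat.eq_zero_or_pos (s n) with h | h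
      · have := hmemS n hn
        rw [h] at this
        simp only [Function.iterate_zero_apply] at this
        tauto
      · exact h
    have h2 : s (g n) ≤ s n - 1 := by
      apply Nat.sInf_le
      have h3 : g^[(s n - 1) + 1] n ∉ U ∨ idx (g^[(s n - 1) + 1] n) ≠ idx n := by
        rw [Nat.sub_add_cancel hpos]; exact hmemS n hn
      exact (hsetEq _).mpr h3
    omega
  -- partition U into four pieces by the parities of idx and s
  have hsplit : ∃ a b : ℕ, {n ∈ U | idx n % 2 = a ∧ s n % 2 = b} ∈ 𝔲 := by
    by_contra hcon
    push_neg at hcon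
    have h4 : U ⊆ {n ∈ U | idx n % 2 = 0 ∧ s n % 2 = 0} ∪
        ({n ∈ U | idx n % 2 = 0 ∧ s n % 2 = 1} ∪
        ({n ∈ U | idx n % 2 = 1 ∧ s n % 2 = 0} ∪
         {n ∈ U | idx n % 2 = 1 ∧ s n % 2 = 1})) := by
      intro n hn
      have h5 : idx n % 2 = 0 ∨ idx n % 2 = 1 := Nat.mod_two_eq_zero_or_one _
      have h6 : s n % 2 = 0 ∨ s n % 2 = 1 := Nat.mod_two_eq_zero_or_one _
      rcases h5 with h5 | h5 <;> rcases h6 with h6 | h6 <;>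
        simp [Set.mem_union, Set.mem_setOf_eq, hn, h5, h6]
    have h7 := Filter.mem_of_superset hU h4
    rcases Ultrafilter.union_mem_iff.mp h7 with h8 | h8
    · exact hcon 0 0 h8
    rcases Ultrafilter.union_mem_iff.mp h8 with h9 | h9
    · exact hcon 0 1 h9
    rcases Ultrafilter.union_mem_iff.mp h9 with h10 | h10
    · exact hcon 1 0 h10
    · exact hcon 1 1 h10
  obtain ⟨a, b, hV⟩ := hsplit
  have hpre : f ⁻¹' {n ∈ U | idx n % 2 = a ∧ s n % 2 = b} ∈ 𝔲 := by
    rw [← Ultrafilter.mem_map, hf]; exact hV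
  obtain ⟨n, hn1, hn2⟩ := Filter.nonempty_of_mem (Filter.inter_mem hV hpre)
  obtain ⟨hnU, hnidx, hns⟩ := hn1
  obtain ⟨hfU, hfidx, hfs⟩ := hn2
  have hgn : g n = f n := hg n hnU
  rcases hstep n hnU with h | h <;> rw [hgn] at h
  · have := hrec n hnU (hgn ▸ hfU) (hgn ▸ h)
    rw [hgn] at this
    omega
  · omega

/-- Interval endpoints used in the increasing case: `m ≤ escBound g k → g m < escBound g (k+1)`. -/
private def escBound (g : ℕ → ℕ) : ℕ → ℕ
  | 0 => 0
  | k + 1 => max (escBound g k) ((Finset.range (escBound g k + 1)).sup g) + 1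

private lemma escBound_lt (g : ℕ → ℕ) (k : ℕ) : escBound g k < escBound g (k + 1) := by
  simp only [escBound]
  omega

private lemma escBound_le_self (g : ℕ → ℕ) (k : ℕ) : k ≤ escBound g k := by
  induction k with
  | zero => simp [escBound]
  | succ k ih => have := escBound_lt g k; omega

private lemma escBound_bound (g : ℕ → ℕ) {m k : ℕ} (h : m ≤ escBound g k) :
    g m < escBound g (k + 1) := by
  have h1 : g m ≤ (Finset.range (escBound g k + 1)).sup g :=
    Finset.le_sup (Finset.mem_range.mpr (by omega))
  simp only [escBound]
  omega

/-- (Rudin/Katětov fixed-point lemma) If `f : ω → ω` pushes an ultrafilter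
`𝔲` forward to itself, then `{n : f n = n} ∈ 𝔲`. -/
theorem rk_fixed_point (𝔲 : Ultrafilter ℕ) (f : ℕ → ℕ)
    (hf : Ultrafilter.map f 𝔲 = 𝔲) :
    {n : ℕ | f n = n} ∈ 𝔲 := by
  classical
  by_contra h
  have hne : {n : ℕ | f n ≠ n} ∈ 𝔲 := by
    have h2 := Ultrafilter.compl_mem_iff_notMem.mpr h
    have h3 : {n : ℕ | f n = n}ᶜ = {n : ℕ | f n ≠ n} := rfl
    rwa [h3] at h2
  have hsplit : {n : ℕ | f n < n} ∪ {n : ℕ | n < f n} ∈ 𝔲 := by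
    apply Filter.mem_of_superset hne
    intro n hn
    simp only [Set.mem_setOf_eq] at hn
    rcases Nat.lt_or_lt_of_ne hn with h' | h'
    · exact Or.inl h'
    · exact Or.inr h'
  rcases Ultrafilter.union_mem_iff.mp hsplit with hU | hU
  · -- decreasing case
    set U : Set ℕ := {n : ℕ | f n < n} with hUdef
    set g : ℕ → ℕ := fun m => if f m < m then f m else m with hgdef
    refine rk_aux 𝔲 f g hf U hU (fun n hn => by simp [hgdef, hn.out]) (fun _ => 0)
      (fun n _ => Or.inl rfl) ?_
    intro n hn
    by_contra hcon
    push_neg at hcon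
    have hall : ∀ j, g^[j] n ∈ U := fun j => (hcon j).1
    have hdesc : ∀ j, g^[j] n + j ≤ n := by
      intro j
      induction j with
      | zero => simp
      | succ j ih =>
        have h1 : g^[j] n ∈ U := hall j
        have h2 : g^[j + 1] n = g (g^[j] n) := Function.iterate_succ_apply' g j n
        have h3 : g (g^[j] n) = f (g^[j] n) := by
          show (if f (g^[j] n) < g^[j] n then f (g^[j] n) else g^[j] n) = f (g^[j] n)
          exact if_pos h1.out
        have h4 : f (g^[j] n) < g^[j] n := h1.out
        omega
    have := hdesc (n + 1)
    omega
  · -- increasing case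
    set U : Set ℕ := {n : ℕ | n < f n} with hUdef
    set g : ℕ → ℕ := fun m => if m < f m then f m else m with hgdef
    have hgU : ∀ n ∈ U, g n = f n := fun n hn => by simp [hgdef, hn.out]
    set idx : ℕ → ℕ := fun n => sInf {k | n < escBound g (k + 1)} with hidxdef
    have hne' : ∀ n : ℕ, {k | n < escBound g (k + 1)}.Nonempty := by
      intro n
      exact ⟨n, lt_of_lt_of_le (Nat.lt_succ_self n) (escBound_le_self g (n + 1))⟩
    have hhigh : ∀ n : ℕ, n < escBound g (idx n + 1) := fun n => Nat.sInf_mem (hne' n)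
    have hlow : ∀ n : ℕ, escBound g (idx n) ≤ n := by
      intro n
      rcases Nat.eq_zero_or_pos (idx n) with h' | h'
      · rw [h']; simp [escBound]
      · have h1 : idx n - 1 ∉ {k | n < escBound g (k + 1)} := by
          apply Nat.notMem_of_lt_sInf
          have he : sInf {k | n < escBound g (k + 1)} = idx n := by rw [hidxdef]
          omega
        simp only [Set.mem_setOf_eq, not_lt] at h1
        have h2 : idx n - 1 + 1 = idx n := by omega
        rwa [h2] at h1
    refine rk_aux 𝔲 f g hf U hU hgU idx ?_ ?_
    · -- step property
      intro n hn
      have hgt : n < g n := by rw [hgU n hn]; exact hn.out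
      have h1 : idx n ≤ idx (g n) := by
        apply Nat.sInf_le
        have := hhigh (g n)
        simp only [Set.mem_setOf_eq]
        omega
      have h2 : idx (g n) ≤ idx n + 1 := by
        apply Nat.sInf_le
        have h3 : n ≤ escBound g (idx n + 1) := le_of_lt (hhigh n)
        have h4 := escBound_bound g h3
        simp only [Set.mem_setOf_eq]
        omega
      omega
    · -- escape property
      intro n hn
      by_contra hcon
      push_neg at hcon
      have hgrow : ∀ j, n + j ≤ g^[j] n := by
        intro j
        induction j with
        | zero => simp
        | succ j ih =>
          have h1 : g^[j] n ∈ U := (hcon j).1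
          have h2 : g^[j + 1] n = g (g^[j] n) := Function.iterate_succ_apply' g j n
          have h3 : g (g^[j] n) = f (g^[j] n) := hgU _ h1
          have h4 : g^[j] n < f (g^[j] n) := h1.out
          omega
      have hbdd : ∀ j, g^[j] n < escBound g (idx n + 1) := by
        intro j
        have h1 := hhigh (g^[j] n)
        rw [(hcon j).2] at h1
        exact h1
      have := hgrow (escBound g (idx n + 1))
      have := hbdd (escBound g (idx n + 1))
      omega
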